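/- arXiv:2508.14446 — 2 statements merged into one kernel-verified Lean document; each statement's English description precedes it below -/
import Mathlib

section
/- The space of Lipschitz homeomorphisms of the circle equipped with the Lipschitz metric d_1(f,g) = sup_p d(f(p),g(p)) + L(f-g) (where L denotes the Lipschitz seminorm) is not separable. -/
open scoped BigOperators

/-- The Lipschitz seminorm (best Lipschitz constant) of a map of the circle. -/
noncomputable def lipSemi (h : AddCircle (1:ℝ) → AddCircle (1:ℝ)) : ℝ :=
  sInf {K : ℝ | 0 ≤ K ∧ ∀ p q, dist (h p) (h q) ≤ K * dist p q}

/-- Lipschitz homeomorphisms of the circle: Lipschitz bijections with Lipschitz inverse. -/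
def LipHomeoCircle : Set (AddCircle (1:ℝ) → AddCircle (1:ℝ)) :=
  {f | ∃ (K K' : NNReal) (finv : AddCircle (1:ℝ) → AddCircle (1:ℝ)),
    LipschitzWith K f ∧ Function.LeftInverse finv f ∧ Function.RightInverse finv f ∧
    LipschitzWith K' finv}

/-- The Lipschitz metric `d₁(f,g) = d_∞(f,g) + L(f-g)`. -/
noncomputable def dOne (f g : AddCircle (1:ℝ) → AddCircle (1:ℝ)) : ℝ :=
  (⨆ p, dist (f p) (g p)) + lipSemi (f - g)

namespace NotSepAux

instance factZeroLtOne : Fact ((0:ℝ) < 1) := ⟨one_pos⟩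

/-- Norm of a real coerced to the circle is at most the absolute value. -/
lemma norm_coe_le (x : ℝ) : ‖(x : AddCircle (1:ℝ))‖ ≤ |x| := by
  simpa [Real.norm_eq_abs] using QuotientAddGroup.norm_mk_le_norm (S := AddSubgroup.zmultiples (1:ℝ)) (m := x)

/-- For `0 ≤ a ≤ 1/2`, the circle norm of `a` is `a` itself. -/
lemma norm_coe_eq {a : ℝ} (h0 : 0 ≤ a) (h : a ≤ 1/2) : ‖(a : AddCircle (1:ℝ))‖ = a := by
  have := (AddCircle.norm_coe_eq_abs_iff (p := (1:ℝ)) one_ne_zero (x := a)).mpr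
    (by rw [abs_of_nonneg h0, abs_one]; linarith)
  rw [this, abs_of_nonneg h0]

/-- The perturbation map. -/
noncomputable def φm (t : ℝ) : AddCircle (1:ℝ) → AddCircle (1:ℝ) :=
  fun p => ((2⁻¹ * ‖p - (t : AddCircle (1:ℝ))‖ : ℝ) : AddCircle (1:ℝ))

lemma φm_dist (t : ℝ) (p q : AddCircle (1:ℝ)) :
    dist (φm t p) (φm t q) ≤ 2⁻¹ * dist p q := by
  have h1 : dist (φm t p) (φm t q)
      ≤ |2⁻¹ * ‖p - (t : AddCircle (1:ℝ))‖ - 2⁻¹ * ‖q - (t : AddCircle (1:ℝ))‖| := by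
    rw [dist_eq_norm, φm, φm, ← AddCircle.coe_sub]
    exact norm_coe_le _
  have h2 : |2⁻¹ * ‖p - (t : AddCircle (1:ℝ))‖ - 2⁻¹ * ‖q - (t : AddCircle (1:ℝ))‖|
      = 2⁻¹ * |‖p - (t : AddCircle (1:ℝ))‖ - ‖q - (t : AddCircle (1:ℝ))‖| := by
    rw [← mul_sub, abs_mul]; norm_num
  have h3 : |‖p - (t : AddCircle (1:ℝ))‖ - ‖q - (t : AddCircle (1:ℝ))‖|
      ≤ ‖(p - (t : AddCircle (1:ℝ))) - (q - (t : AddCircle (1:ℝ)))‖ :=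
    abs_norm_sub_norm_le _ _
  have h4 : (p - (t : AddCircle (1:ℝ))) - (q - (t : AddCircle (1:ℝ))) = p - q := by abel
  rw [dist_eq_norm p q]
  calc dist (φm t p) (φm t q) ≤ _ := h1
    _ = _ := h2
    _ ≤ 2⁻¹ * ‖p - q‖ := by rw [← h4]; exact mul_le_mul_of_nonneg_left h3 (by norm_num)

/-- The family of Lipschitz homeomorphisms indexed by `t`. -/
noncomputable def Fm (t : ℝ) : AddCircle (1:ℝ) → AddCircle (1:ℝ) :=
  fun p => p + φm t p

lemma contracting (t : ℝ) (y : AddCircle (1:ℝ)) :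
    ContractingWith 2⁻¹ (fun p => y - φm t p) := by
  constructor
  · rw [← NNReal.coe_lt_coe]; norm_num
  · apply LipschitzWith.of_dist_le_mul
    intro p q
    have h : dist (y - φm t p) (y - φm t q) = dist (φm t p) (φm t q) := by
      rw [dist_eq_norm, dist_eq_norm]
      have : y - φm t p - (y - φm t q) = -(φm t p - φm t q) := by abel
      rw [this, norm_neg]
    have hc : ((2⁻¹ : NNReal) : ℝ) = 2⁻¹ := by norm_num
    rw [h, hc]
    exact φm_dist t p q

/-- The inverse of `Fm t`, obtained from the Banach fixed point theorem. -/
noncomputable def Fminv (t : ℝ) : AddCircle (1:ℝ) → AddCircle (1:ℝ) :=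
  fun y => (contracting t y).fixedPoint (fun p => y - φm t p)

lemma Fminv_fixed (t : ℝ) (y : AddCircle (1:ℝ)) :
    y - φm t (Fminv t y) = Fminv t y :=
  (contracting t y).fixedPoint_isFixedPt

lemma Fm_rightInv (t : ℝ) : Function.RightInverse (Fminv t) (Fm t) := by
  intro y
  have h := Fminv_fixed t y
  rw [Fm]
  nth_rewrite 1 [← h]
  abel

lemma Fm_leftInv (t : ℝ) : Function.LeftInverse (Fminv t) (Fm t) := by
  intro p
  have hfix : Function.IsFixedPt (fun q => Fm t p - φm t q) p := by
    show Fm t p - φm t p = p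
    rw [Fm]; abel
  exact ((contracting t (Fm t p)).fixedPoint_unique hfix).symm

lemma Fm_lipschitz (t : ℝ) : LipschitzWith 2 (Fm t) := by
  apply LipschitzWith.of_dist_le_mul
  intro p q
  have h1 : dist (Fm t p) (Fm t q) ≤ dist p q + dist (φm t p) (φm t q) :=
    dist_add_add_le p (φm t p) q (φm t q)
  have h2 := φm_dist t p q
  have hd : (0:ℝ) ≤ dist p q := dist_nonneg
  push_cast
  linarith

lemma Fminv_lipschitz (t : ℝ) : LipschitzWith 2 (Fminv t) := by
  apply LipschitzWith.of_dist_le_mul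
  intro y z
  have hy := Fminv_fixed t y
  have hz := Fminv_fixed t z
  have h1 : dist (Fminv t y) (Fminv t z)
      ≤ dist y z + dist (φm t (Fminv t y)) (φm t (Fminv t z)) := by
    calc dist (Fminv t y) (Fminv t z)
        = dist (y - φm t (Fminv t y)) (z - φm t (Fminv t z)) := by rw [hy, hz]
      _ ≤ dist y z + dist (φm t (Fminv t y)) (φm t (Fminv t z)) := dist_sub_sub_le _ _ _ _
  have h2 := φm_dist t (Fminv t y) (Fminv t z)
  have hd : (0:ℝ) ≤ dist y z := dist_nonneg
  push_cast
  linarith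

lemma Fm_mem (t : ℝ) : Fm t ∈ LipHomeoCircle :=
  ⟨2, 2, Fminv t, Fm_lipschitz t, Fm_leftInv t, Fm_rightInv t, Fminv_lipschitz t⟩

/-- If the defining set is nonempty, `lipSemi h` is itself a Lipschitz constant for `h`. -/
lemma lipSemi_spec {h : AddCircle (1:ℝ) → AddCircle (1:ℝ)} {K : ℝ} (hK : 0 ≤ K)
    (hlip : ∀ p q, dist (h p) (h q) ≤ K * dist p q) :
    ∀ p q, dist (h p) (h q) ≤ lipSemi h * dist p q := by
  intro p q
  rcases eq_or_lt_of_le (dist_nonneg : (0:ℝ) ≤ dist p q) with hd | hd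
  · have h0 : dist (h p) (h q) ≤ 0 := by
      have := hlip p q; rw [← hd] at this; simpa using this
    have : lipSemi h * dist p q = 0 := by rw [← hd]; ring
    linarith
  · have hle : dist (h p) (h q) / dist p q ≤ lipSemi h := by
      refine le_csInf ⟨K, ⟨hK, hlip⟩⟩ ?_
      rintro K' ⟨_, hK'⟩
      rw [div_le_iff₀ hd]
      exact hK' p q
    calc dist (h p) (h q) = dist (h p) (h q) / dist p q * dist p q := by
          field_simp
      _ ≤ lipSemi h * dist p q := mul_le_mul_of_nonneg_right hle hd.le

lemma lipSemi_neg (h : AddCircle (1:ℝ) → AddCircle (1:ℝ)) :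
    lipSemi (-h) = lipSemi h := by
  unfold lipSemi
  congr 1
  ext K
  simp only [Set.mem_setOf_eq, Pi.neg_apply, dist_neg_neg]

theorem lipHomeoCircle_not_separable' :
    ¬ ∃ T : Set (AddCircle (1:ℝ) → AddCircle (1:ℝ)),
      T.Countable ∧ T ⊆ LipHomeoCircle ∧
      ∀ f ∈ LipHomeoCircle, ∀ ε : ℝ, 0 < ε → ∃ g ∈ T, dOne f g < ε := by
  rintro ⟨T, hTc, hTsub, hdense⟩
  have hchoice : ∀ s : ℝ, ∃ g, g ∈ T ∧ dOne (Fm s) g < 1/2 := by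
    intro s
    obtain ⟨g, hgT, hg⟩ := hdense (Fm s) (Fm_mem s) (1/2) (by norm_num)
    exact ⟨g, hgT, hg⟩
  choose g hgT hglt using hchoice
  -- the supremum part of `dOne` is nonnegative
  have sup_nonneg : ∀ f₁ f₂ : AddCircle (1:ℝ) → AddCircle (1:ℝ),
      (0:ℝ) ≤ ⨆ p, dist (f₁ p) (f₂ p) :=
    fun f₁ f₂ => Real.iSup_nonneg fun p => dist_nonneg
  -- hence the Lipschitz seminorm part is < 1/2
  have hlt : ∀ s : ℝ, lipSemi (Fm s - g s) < 1/2 := by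
    intro s
    have := hglt s
    rw [dOne] at this
    have := sup_nonneg (Fm s) (g s)
    linarith
  -- injectivity of s ↦ g s on Ioo 0 1
  have hinj : Set.InjOn g (Set.Ioo (0:ℝ) 1) := by
    intro s hs t ht hgst
    by_contra hne
    -- the two coerced points are distinct in the circle
    have hne' : ((s : AddCircle (1:ℝ))) ≠ ((t : AddCircle (1:ℝ))) := by
      intro hEq
      apply hne
      have hs' : s ∈ Set.Ico (0:ℝ) (0 + 1) := by
        simp only [zero_add]; exact ⟨hs.1.le, hs.2⟩
      have ht' : t ∈ Set.Ico (0:ℝ) (0 + 1) := by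
        simp only [zero_add]; exact ⟨ht.1.le, ht.2⟩
      exact (AddCircle.coe_eq_coe_iff_of_mem_Ico hs' ht').mp hEq
    set P : AddCircle (1:ℝ) := (s : AddCircle (1:ℝ))
    set Q : AddCircle (1:ℝ) := (t : AddCircle (1:ℝ))
    have hd0 : 0 < dist P Q := dist_pos.mpr hne'
    set d : ℝ := dist P Q with hd
    -- value of the difference at the two special points
    have hφsP : φm s P = (0 : AddCircle (1:ℝ)) := by
      rw [φm]; norm_num [P]
    have hφtP : φm t P = ((2⁻¹ * d : ℝ) : AddCircle (1:ℝ)) := by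
      rw [φm, hd, dist_eq_norm]
    have hφsQ : φm s Q = ((2⁻¹ * d : ℝ) : AddCircle (1:ℝ)) := by
      rw [φm, hd, dist_eq_norm, norm_sub_rev]
    have hφtQ : φm t Q = (0 : AddCircle (1:ℝ)) := by
      rw [φm]; norm_num [Q]
    have key : dist ((Fm s - Fm t) P) ((Fm s - Fm t) Q) = d := by
      have e1 : (Fm s - Fm t) P = φm s P - φm t P := by
        simp only [Pi.sub_apply, Fm]; abel
      have e2 : (Fm s - Fm t) Q = φm s Q - φm t Q := by
        simp only [Pi.sub_apply, Fm]; abel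
      rw [e1, e2, hφsP, hφtP, hφsQ, hφtQ, dist_eq_norm]
      have : (0 : AddCircle (1:ℝ)) - ((2⁻¹ * d : ℝ) : AddCircle (1:ℝ))
          - (((2⁻¹ * d : ℝ) : AddCircle (1:ℝ)) - (0 : AddCircle (1:ℝ)))
          = -(((2⁻¹ * d : ℝ) : AddCircle (1:ℝ)) + ((2⁻¹ * d : ℝ) : AddCircle (1:ℝ))) := by
        abel
      rw [this, norm_neg, ← AddCircle.coe_add]
      have hdd : 2⁻¹ * d + 2⁻¹ * d = d := by ring
      rw [hdd]
      apply norm_coe_eq hd0.le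
      have := AddCircle.norm_le_half_period (p := (1:ℝ)) (x := P - Q) one_ne_zero
      rw [hd, dist_eq_norm]
      simpa using this
    -- Lipschitz constants for the two differences
    obtain ⟨Ks, _, _, hKs, _, _, _⟩ := hTsub (hgT s)
    -- `Fm s - g s` is Lipschitz
    have hA : ∀ p q, dist ((Fm s - g s) p) ((Fm s - g s) q)
        ≤ (2 + (Ks:ℝ)) * dist p q := by
      intro p q
      simp only [Pi.sub_apply]
      calc dist (Fm s p - g s p) (Fm s q - g s q)
          ≤ dist (Fm s p) (Fm s q) + dist (g s p) (g s q) := dist_sub_sub_le _ _ _ _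
        _ ≤ 2 * dist p q + (Ks:ℝ) * dist p q := by
            have h1 := (Fm_lipschitz s).dist_le_mul p q
            have h2 := hKs.dist_le_mul p q
            push_cast at h1
            linarith
        _ = (2 + (Ks:ℝ)) * dist p q := by ring
    have hB : ∀ p q, dist ((g s - Fm t) p) ((g s - Fm t) q)
        ≤ ((Ks:ℝ) + 2) * dist p q := by
      intro p q
      simp only [Pi.sub_apply]
      calc dist (g s p - Fm t p) (g s q - Fm t q)
          ≤ dist (g s p) (g s q) + dist (Fm t p) (Fm t q) := dist_sub_sub_le _ _ _ _
        _ ≤ (Ks:ℝ) * dist p q + 2 * dist p q := by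
            have h1 := (Fm_lipschitz t).dist_le_mul p q
            have h2 := hKs.dist_le_mul p q
            push_cast at h1
            linarith
        _ = ((Ks:ℝ) + 2) * dist p q := by ring
    have hKs0 : (0:ℝ) ≤ 2 + (Ks:ℝ) := by positivity
    have hKs0' : (0:ℝ) ≤ (Ks:ℝ) + 2 := by positivity
    have hAspec := lipSemi_spec hKs0 hA
    have hBspec := lipSemi_spec hKs0' hB
    -- seminorm bounds
    have ha : lipSemi (Fm s - g s) < 1/2 := hlt s
    have hb : lipSemi (g s - Fm t) < 1/2 := by
      have : g s - Fm t = -(Fm t - g t) := by rw [hgst]; funext p; simp [Pi.sub_apply]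
      rw [this, lipSemi_neg]
      exact hlt t
    -- triangle inequality at the special points
    have hsplit : ∀ p, (Fm s - Fm t) p = (Fm s - g s) p + (g s - Fm t) p := by
      intro p; simp only [Pi.sub_apply]; abel
    have htri : dist ((Fm s - Fm t) P) ((Fm s - Fm t) Q)
        ≤ (lipSemi (Fm s - g s) + lipSemi (g s - Fm t)) * d := by
      rw [hsplit P, hsplit Q]
      calc dist ((Fm s - g s) P + (g s - Fm t) P) ((Fm s - g s) Q + (g s - Fm t) Q)
          ≤ dist ((Fm s - g s) P) ((Fm s - g s) Q)
            + dist ((g s - Fm t) P) ((g s - Fm t) Q) := dist_add_add_le _ _ _ _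
        _ ≤ lipSemi (Fm s - g s) * d + lipSemi (g s - Fm t) * d := by
            have := hAspec P Q
            have := hBspec P Q
            rw [← hd] at *
            exact add_le_add (hAspec P Q) (hBspec P Q)
        _ = (lipSemi (Fm s - g s) + lipSemi (g s - Fm t)) * d := by ring
    rw [key] at htri
    nlinarith
  -- contradiction with uncountability of Ioo 0 1
  have hmaps : Set.MapsTo g (Set.Ioo (0:ℝ) 1) T := fun s _ => hgT s
  have hcount : (Set.Ioo (0:ℝ) 1).Countable := hmaps.countable_of_injOn hinj hTc
  have hcard : Cardinal.mk (Set.Ioo (0:ℝ) 1) = Cardinal.continuum :=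
    Cardinal.mk_Ioo_real zero_lt_one
  rw [← Cardinal.le_aleph0_iff_set_countable, hcard] at hcount
  exact absurd hcount (not_le.mpr Cardinal.aleph0_lt_continuum)

end NotSepAux

/-- The space of Lipschitz homeomorphisms of the circle with the Lipschitz metric `d₁`
is not separable: there is no countable subset that is dense with respect to `d₁`. -/
theorem lipHomeoCircle_not_separable :
    ¬ ∃ T : Set (AddCircle (1:ℝ) → AddCircle (1:ℝ)),
      T.Countable ∧ T ⊆ LipHomeoCircle ∧
      ∀ f ∈ LipHomeoCircle, ∀ ε : ℝ, 0 < ε → ∃ g ∈ T, dOne f g < ε :=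
  NotSepAux.lipHomeoCircle_not_separable'
end

section
/- Rigidity step: suppose φ : Ω → Hom(G) conjugates cocycles f and g (f_x = φ_{σ(x)} ∘ g_x ∘ φ_x^{-1}), the g-cocycle has bounded distortion (L(g^n_x), L((g^n_x)^{-1}) ≤ K for all n), each φ_y is β-Hölder with constant H(φ_y), and along an orbit pair d_∞(φ_{σ^n(y)}^{-1} ∘ φ_{σ^n(x)}, Id) → 0 with H(φ_{σ^n(y)}^{-1}) bounded. Then the sequence a_n = φ_y ∘ (g^n_y)^{-1} ∘ φ_{σ^n(y)}^{-1} ∘ φ_{σ^n(x)} ∘ g^n_x ∘ φ_x^{-1} and b_n = φ_y ∘ (g^n_y)^{-1} ∘ g^n_x ∘ φ_x^{-1} satisfy d_∞(a_n, b_n) ≤ H(φ_y) K^β d_∞(φ_{σ^n(y)}^{-1} ∘ φ_{σ^n(x)}, Id)^β → 0. -/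
open Filter Topology

/-- Iterates of a cocycle: `g^0_x = Id`, `g^{n+1}_x = g_{σ^n(x)} ∘ g^n_x`. -/
def cocycleIter {Ω G : Type*} (σ : Ω → Ω) (f : Ω → G ≃ G) : ℕ → Ω → G ≃ G
  | 0, _ => Equiv.refl G
  | n + 1, x => (cocycleIter σ f n x).trans (f (σ^[n] x))

/-- Rigidity step: if `φ` conjugates the cocycles `f` and `g`, the `g`-cocycle has
bounded distortion `K`, each `φ_y` is `β`-Hölder with constant `H(φ_y)`, and along the
orbit pair `d_∞(φ_{σ^n(y)}⁻¹ ∘ φ_{σ^n(x)}, Id) → 0` while `H(φ_{σ^n(y)}⁻¹)` stays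
bounded, then the sequences
`a_n = φ_y ∘ (g^n_y)⁻¹ ∘ φ_{σ^n(y)}⁻¹ ∘ φ_{σ^n(x)} ∘ g^n_x ∘ φ_x⁻¹` and
`b_n = φ_y ∘ (g^n_y)⁻¹ ∘ g^n_x ∘ φ_x⁻¹` satisfy
`d_∞(a_n, b_n) ≤ H(φ_y) K^β d_∞(φ_{σ^n(y)}⁻¹ ∘ φ_{σ^n(x)}, Id)^β → 0`. -/
theorem rigidity_step
    {Ω G : Type*} [MetricSpace G] [CompactSpace G] [Nonempty G]
    (σ : Ω → Ω) (f g φ : Ω → G ≃ G) (x y : Ω) (β K Hφ M : ℝ)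
    (hβ0 : 0 < β) (hβ1 : β ≤ 1) (hK : 0 ≤ K) (hHφ : 0 ≤ Hφ)
    -- `φ` conjugates `f` and `g`:
    (hconj : ∀ z : Ω, f z = (φ z).symm.trans ((g z).trans (φ (σ z))))
    -- bounded distortion of the `g`-cocycle:
    (hbd : ∀ (n : ℕ) (z : Ω) (p q : G),
      dist (cocycleIter σ g n z p) (cocycleIter σ g n z q) ≤ K * dist p q ∧
      dist ((cocycleIter σ g n z).symm p) ((cocycleIter σ g n z).symm q) ≤ K * dist p q)
    -- `φ_y` is `β`-Hölder with constant `Hφ`: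
    (hφy : ∀ p q : G, dist (φ y p) (φ y q) ≤ Hφ * dist p q ^ β)
    -- the Hölder constants `H(φ_{σ^n(y)}⁻¹)` are bounded:
    (hφinv : ∀ (n : ℕ) (p q : G),
      dist ((φ (σ^[n] y)).symm p) ((φ (σ^[n] y)).symm q) ≤ M * dist p q ^ β)
    -- `d_∞(φ_{σ^n(y)}⁻¹ ∘ φ_{σ^n(x)}, Id) → 0`:
    (htend : Tendsto
      (fun n : ℕ => ⨆ q : G, dist ((φ (σ^[n] y)).symm (φ (σ^[n] x) q)) q)
      atTop (nhds 0)) :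
    (∀ (n : ℕ) (p : G),
      dist
        (φ y ((cocycleIter σ g n y).symm ((φ (σ^[n] y)).symm
          (φ (σ^[n] x) (cocycleIter σ g n x ((φ x).symm p))))))
        (φ y ((cocycleIter σ g n y).symm (cocycleIter σ g n x ((φ x).symm p))))
        ≤ Hφ * K ^ β *
          (⨆ q : G, dist ((φ (σ^[n] y)).symm (φ (σ^[n] x) q)) q) ^ β) ∧
    Tendsto
      (fun n : ℕ => ⨆ p : G,
        dist
          (φ y ((cocycleIter σ g n y).symm ((φ (σ^[n] y)).symm
            (φ (σ^[n] x) (cocycleIter σ g n x ((φ x).symm p))))))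
          (φ y ((cocycleIter σ g n y).symm (cocycleIter σ g n x ((φ x).symm p)))))
      atTop (nhds 0) := by

  have hbdd : ∀ n : ℕ, BddAbove (Set.range
      fun q : G => dist ((φ (σ^[n] y)).symm (φ (σ^[n] x) q)) q) := by
    intro n
    refine ⟨Metric.diam (Set.univ : Set G), ?_⟩
    rintro _ ⟨q, rfl⟩
    exact Metric.dist_le_diam_of_mem isCompact_univ.isBounded (Set.mem_univ _) (Set.mem_univ _)
  have hSnonneg : ∀ n : ℕ,
      0 ≤ ⨆ q : G, dist ((φ (σ^[n] y)).symm (φ (σ^[n] x) q)) q :=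
    fun n => Real.iSup_nonneg fun _ => dist_nonneg
  have hmain : ∀ (n : ℕ) (p : G),
      dist
        (φ y ((cocycleIter σ g n y).symm ((φ (σ^[n] y)).symm
          (φ (σ^[n] x) (cocycleIter σ g n x ((φ x).symm p))))))
        (φ y ((cocycleIter σ g n y).symm (cocycleIter σ g n x ((φ x).symm p))))
        ≤ Hφ * K ^ β *
          (⨆ q : G, dist ((φ (σ^[n] y)).symm (φ (σ^[n] x) q)) q) ^ β := by
    intro n p
    set q := cocycleIter σ g n x ((φ x).symm p) with hq
    set S := ⨆ q : G, dist ((φ (σ^[n] y)).symm (φ (σ^[n] x) q)) q with hSdef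
    have h1 : dist ((cocycleIter σ g n y).symm ((φ (σ^[n] y)).symm (φ (σ^[n] x) q)))
        ((cocycleIter σ g n y).symm q) ≤ K * S := by
      refine (hbd n y _ _).2.trans ?_
      exact mul_le_mul_of_nonneg_left (le_ciSup (hbdd n) q) hK
    calc dist (φ y ((cocycleIter σ g n y).symm ((φ (σ^[n] y)).symm (φ (σ^[n] x) q))))
          (φ y ((cocycleIter σ g n y).symm q))
        ≤ Hφ * dist ((cocycleIter σ g n y).symm ((φ (σ^[n] y)).symm (φ (σ^[n] x) q)))
            ((cocycleIter σ g n y).symm q) ^ β := hφy _ _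
      _ ≤ Hφ * (K * S) ^ β := by
          exact mul_le_mul_of_nonneg_left
            (Real.rpow_le_rpow dist_nonneg h1 hβ0.le) hHφ
      _ = Hφ * K ^ β * S ^ β := by
          rw [Real.mul_rpow hK (hSnonneg n), mul_assoc]
  refine ⟨hmain, ?_⟩
  have htend2 : Tendsto (fun n : ℕ => Hφ * K ^ β *
      (⨆ q : G, dist ((φ (σ^[n] y)).symm (φ (σ^[n] x) q)) q) ^ β) atTop (nhds 0) := by
    have h3 : Tendsto (fun n : ℕ =>
        (⨆ q : G, dist ((φ (σ^[n] y)).symm (φ (σ^[n] x) q)) q) ^ β) atTop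
        (nhds ((0 : ℝ) ^ β)) :=
      (Real.continuousAt_rpow_const 0 β (Or.inr hβ0.le)).tendsto.comp htend
    rw [Real.zero_rpow hβ0.ne'] at h3
    simpa using h3.const_mul (Hφ * K ^ β)
  exact squeeze_zero (fun n => Real.iSup_nonneg fun _ => dist_nonneg)
    (fun n => ciSup_le fun p => hmain n p) htend2
end
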